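/- Let μ be a centered, compactly supported Borel probability measure on ℝ that is not a Dirac mass, μ̂ a Nevanlinna measure for μ, t > 1, and ω_t a subordination function for μ at time t. If ω₀ ∈ ℂ⁺ satisfies I_{μ̂}(ω₀) < 1/(t − 1), then the point z₀ := ω₀ − (t − 1)·∫_ℝ (x − ω₀)⁻¹ dμ̂(x) lies in ℂ⁺ and ω_t(z₀) = ω₀; in particular every ω₀ ∈ ℂ⁺ with I_{μ̂}(ω₀) < 1/(t − 1) is in the range of ω_t. -/

import Mathlib

open MeasureTheory Complex Set Filter Topology

noncomputable section

/-- Cauchy–Stieltjes transform `m_μ(z) = ∫ (x − z)⁻¹ dμ(x)`. -/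
def mTr (μ : Measure ℝ) (z : ℂ) : ℂ := ∫ x, ((x : ℂ) - z)⁻¹ ∂μ

/-- Negative reciprocal Cauchy–Stieltjes transform `F_μ(z) = −1/m_μ(z)`. -/
def FTr (μ : Measure ℝ) (z : ℂ) : ℂ := -(mTr μ z)⁻¹

/-- `I_ν(ω) = ∫ |x − ω|⁻² dν(x)`. -/
def Inu (ν : Measure ℝ) (ω : ℂ) : ℝ := ∫ x, (Complex.normSq ((x : ℂ) - ω))⁻¹ ∂ν

/-- Topological support of a Borel measure on ℝ. -/
def msupport (μ : Measure ℝ) : Set ℝ := {x | ∀ U : Set ℝ, IsOpen U → x ∈ U → 0 < μ U}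

/-- `μh` is a Nevanlinna measure for the (centered) measure `μ`:
a finite Borel measure with `F_μ(ω) − ω = ∫ (x − ω)⁻¹ dμh(x)` on ℂ⁺. -/
def IsNevanlinna (μ μh : Measure ℝ) : Prop :=
  IsFiniteMeasure μh ∧ ∀ ω : ℂ, 0 < ω.im → FTr μ ω - ω = ∫ x, ((x : ℂ) - ω)⁻¹ ∂μh

/-- Subordination function for `μ` at time `t`. -/
structure IsSubordination (μ : Measure ℝ) (t : ℝ) (ω : ℂ → ℂ) : Prop where
  contOn : ContinuousOn ω {z : ℂ | 0 ≤ z.im}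
  mapsTo : ∀ z : ℂ, 0 ≤ z.im → 0 ≤ (ω z).im
  diff : DifferentiableOn ℂ ω {z : ℂ | 0 < z.im}
  im_ge : ∀ z : ℂ, 0 < z.im → z.im ≤ (ω z).im
  subord : ∀ z : ℂ, 0 < z.im → (t : ℂ) * ω z - z = ((t - 1 : ℝ) : ℂ) * FTr μ (ω z)

/-- `ν = μ^{⊞t}`, the free convolution power associated with the subordination function `ω`. -/
def IsFreePower (μ : Measure ℝ) (t : ℝ) (ω : ℂ → ℂ) (ν : Measure ℝ) : Prop :=
  IsProbabilityMeasure ν ∧ ∀ z : ℂ, 0 < z.im → mTr ν z = mTr μ (ω z)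

/-- Subordination functions for the pair `(μa, μb)`. -/
structure IsPairSubordination (μa μb : Measure ℝ) (ωa ωb : ℂ → ℂ) : Prop where
  diff_a : DifferentiableOn ℂ ωa {z : ℂ | 0 < z.im}
  diff_b : DifferentiableOn ℂ ωb {z : ℂ | 0 < z.im}
  im_a : ∀ z : ℂ, 0 < z.im → z.im ≤ (ωa z).im
  im_b : ∀ z : ℂ, 0 < z.im → z.im ≤ (ωb z).im
  lim_a : Tendsto (fun η : ℝ => ωa (η * Complex.I) / (η * Complex.I)) atTop (nhds 1)
  lim_b : Tendsto (fun η : ℝ => ωb (η * Complex.I) / (η * Complex.I)) atTop (nhds 1)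
  eq_a : ∀ z : ℂ, 0 < z.im → ωa z + ωb z - z = FTr μa (ωb z)
  eq_b : ∀ z : ℂ, 0 < z.im → ωa z + ωb z - z = FTr μb (ωa z)

/-- `ν = μa ⊞ μb`, the free additive convolution. -/
def IsFreeConv (μa μb : Measure ℝ) (ωb : ℂ → ℂ) (ν : Measure ℝ) : Prop :=
  IsProbabilityMeasure ν ∧ ∀ z : ℂ, 0 < z.im → mTr ν z = mTr μa (ωb z)

/-- Assumption 1 of the paper: `μ` is a centered, compactly supported probability
measure whose singular part consists of finitely many atoms and whose absolutely
continuous part has a density `ρ` of Jacobi type, supported on finitely many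
disjoint compact intervals with power-law behavior (exponents in `(−1,1)`). -/
structure JacobiData (μ : Measure ℝ) where
  ρ : ℝ → ℝ
  n : ℕ
  npos : 0 < n
  Em : Fin n → ℝ
  Ep : Fin n → ℝ
  βm : Fin n → ℝ
  βp : Fin n → ℝ
  Cj : Fin n → ℝ
  atoms : Finset ℝ
  w : ℝ → ℝ
  prob : IsProbabilityMeasure μ
  compactSupp : ∃ K : Set ℝ, IsCompact K ∧ μ Kᶜ = 0
  centered : ∫ x, x ∂μ = 0
  lt : ∀ j, Em j < Ep j
  disj : ∀ i j, i ≠ j → Disjoint (Set.Icc (Em i) (Ep i)) (Set.Icc (Em j) (Ep j))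
  βm_mem : ∀ j, βm j ∈ Set.Ioo (-1 : ℝ) 1
  βp_mem : ∀ j, βp j ∈ Set.Ioo (-1 : ℝ) 1
  Cj_ge : ∀ j, 1 ≤ Cj j
  ρ_nonneg : ∀ x, 0 ≤ ρ x
  ρ_supp : ∀ x, x ∉ ⋃ j, Set.Icc (Em j) (Ep j) → ρ x = 0
  powerLaw : ∀ j, ∀ᵐ E ∂(volume.restrict (Set.Icc (Em j) (Ep j))),
      (Cj j)⁻¹ * ((E - Em j) ^ (βm j) * (Ep j - E) ^ (βp j)) ≤ ρ E ∧
      ρ E ≤ Cj j * ((E - Em j) ^ (βm j) * (Ep j - E) ^ (βp j))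
  w_nonneg : ∀ a, 0 ≤ w a
  decomp : μ = volume.withDensity (fun x => ENNReal.ofReal (ρ x))
      + ∑ a ∈ atoms, ENNReal.ofReal (w a) • Measure.dirac a

/-- The support of the absolutely continuous part of `μ`. -/
def JacobiData.acSupport {μ : Measure ℝ} (d : JacobiData μ) : Set ℝ :=
  ⋃ j, Set.Icc (d.Em j) (d.Ep j)

/-- The Hölder condition (5.1)/(2.8) of the paper on the density of `μ_ac`. -/
def JacobiData.HolderCond {μ : Measure ℝ} (d : JacobiData μ) : Prop :=
  ∀ j, ∃ L γ : NNReal, 0 < γ ∧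
    HolderOnWith L γ
      (fun E => d.ρ E / ((E - d.Em j) ^ (d.βm j) * (d.Ep j - E) ^ (d.βp j)))
      (Set.Icc (d.Em j) (d.Ep j))

/-- Assumption 2 of the paper: a centered, absolutely continuous probability measure
supported on finitely many disjoint compact intervals, with density of Jacobi type. -/
structure AbsJacobiData (μ : Measure ℝ) where
  ρ : ℝ → ℝ
  n : ℕ
  npos : 0 < n
  Am : Fin n → ℝ
  Ap : Fin n → ℝ
  sm : Fin n → ℝ
  sp : Fin n → ℝ
  Cj : Fin n → ℝ
  prob : IsProbabilityMeasure μ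
  centered : ∫ x, x ∂μ = 0
  lt : ∀ j, Am j < Ap j
  disj : ∀ i j, i ≠ j → Disjoint (Set.Icc (Am i) (Ap i)) (Set.Icc (Am j) (Ap j))
  sm_mem : ∀ j, sm j ∈ Set.Ioo (-1 : ℝ) 1
  sp_mem : ∀ j, sp j ∈ Set.Ioo (-1 : ℝ) 1
  Cj_ge : ∀ j, 1 ≤ Cj j
  ρ_nonneg : ∀ x, 0 ≤ ρ x
  ρ_supp : ∀ x, x ∉ ⋃ j, Set.Icc (Am j) (Ap j) → ρ x = 0
  powerLaw : ∀ j, ∀ᵐ E ∂(volume.restrict (Set.Icc (Am j) (Ap j))),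
      (Cj j)⁻¹ * ((E - Am j) ^ (sm j) * (Ap j - E) ^ (sp j)) ≤ ρ E ∧
      ρ E ≤ Cj j * ((E - Am j) ^ (sm j) * (Ap j - E) ^ (sp j))
  decomp : μ = volume.withDensity (fun x => ENNReal.ofReal (ρ x))



lemma aux_amgm (u v : ℝ) (hu : 0 < u) (hv : 0 < v) :
    u⁻¹ * v⁻¹ ≤ ((u ^ 2)⁻¹ + (v ^ 2)⁻¹) / 2 := by
  have h : ((u ^ 2)⁻¹ + (v ^ 2)⁻¹) / 2 - u⁻¹ * v⁻¹ = (u - v) ^ 2 / (2 * u ^ 2 * v ^ 2) := by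
    field_simp
    ring
  nlinarith [div_nonneg (sq_nonneg (u - v)) (by positivity : (0:ℝ) ≤ 2 * u ^ 2 * v ^ 2), h]

/-- `(x:ℂ) - ω` is nonzero when `Im ω > 0`. -/
lemma aux_sub_ne (x : ℝ) (ω : ℂ) (h : 0 < ω.im) : ((x : ℂ) - ω) ≠ 0 := by
  intro hz
  have := congrArg Complex.im hz
  simp at this
  linarith

lemma aux_im_le_norm (x : ℝ) (ω : ℂ) (h : 0 < ω.im) : ω.im ≤ ‖(x : ℂ) - ω‖ := by
  have h1 : |((x : ℂ) - ω).im| ≤ ‖((x : ℂ) - ω)‖ := Complex.abs_im_le_norm _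
  have h2 : ((x : ℂ) - ω).im = -ω.im := by simp
  rw [h2, abs_neg, abs_of_pos h] at h1
  simpa using h1

lemma aux_cont_inv (ω : ℂ) (h : 0 < ω.im) :
    Continuous (fun x : ℝ => ((x : ℂ) - ω)⁻¹) := by
  apply Continuous.inv₀
  · exact Complex.continuous_ofReal.sub continuous_const
  · exact fun x => aux_sub_ne x ω h

lemma aux_integrable_inv (μh : Measure ℝ) [IsFiniteMeasure μh] (ω : ℂ) (h : 0 < ω.im) :
    Integrable (fun x : ℝ => ((x : ℂ) - ω)⁻¹) μh := by
  apply Integrable.mono' (integrable_const (ω.im)⁻¹)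
    ((aux_cont_inv ω h).aestronglyMeasurable)
  filter_upwards with x
  rw [norm_inv]
  exact inv_anti₀ h (aux_im_le_norm x ω h)

lemma aux_integrable_nsq (μh : Measure ℝ) [IsFiniteMeasure μh] (ω : ℂ) (h : 0 < ω.im) :
    Integrable (fun x : ℝ => (Complex.normSq ((x : ℂ) - ω))⁻¹) μh := by
  apply Integrable.mono' (integrable_const ((ω.im) ^ 2)⁻¹)
  · exact ((Complex.continuous_normSq.comp
      (Complex.continuous_ofReal.sub continuous_const)).inv₀
      (fun x => (Complex.normSq_pos.mpr (aux_sub_ne x ω h)).ne')).aestronglyMeasurable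
  · filter_upwards with x
    have h1 : ω.im ^ 2 ≤ Complex.normSq ((x : ℂ) - ω) := by
      rw [Complex.normSq_eq_norm_sq]
      have := aux_im_le_norm x ω h
      nlinarith [h.le]
    have h2 : (0 : ℝ) < ω.im ^ 2 := by positivity
    rw [Real.norm_eq_abs, _root_.abs_of_nonneg (inv_nonneg.mpr (Complex.normSq_nonneg _))]
    exact inv_anti₀ h2 h1

lemma aux_im_integral (μh : Measure ℝ) [IsFiniteMeasure μh] (ω : ℂ) (h : 0 < ω.im) :
    (∫ x, ((x : ℂ) - ω)⁻¹ ∂μh).im = ω.im * Inu μh ω := by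
  rw [show (∫ x, ((x : ℂ) - ω)⁻¹ ∂μh).im
      = RCLike.im (K := ℂ) (∫ x, ((x : ℂ) - ω)⁻¹ ∂μh) from rfl,
    ← integral_im (aux_integrable_inv μh ω h), Inu, ← integral_const_mul]
  apply integral_congr_ae
  filter_upwards with x
  rw [show RCLike.im (K := ℂ) (((x : ℂ) - ω)⁻¹) = (((x : ℂ) - ω)⁻¹).im from rfl, Complex.inv_im]
  have h2 : ((x : ℂ) - ω).im = -ω.im := by simp
  rw [h2]
  field_simp

lemma aux_Inu_nonneg (μh : Measure ℝ) (ω : ℂ) : 0 ≤ Inu μh ω :=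
  integral_nonneg fun x => inv_nonneg.mpr (Complex.normSq_nonneg _)

/-- any `ω₀ ∈ ℂ⁺` with `I_{μ̂}(ω₀) < 1/(t−1)` is in the range of `ω_t`;
more precisely `z₀ := ω₀ − (t−1)·∫ (x−ω₀)⁻¹ dμ̂` lies in ℂ⁺ and `ω_t(z₀) = ω₀`. -/
theorem statement4 (μ : Measure ℝ) (hprob : IsProbabilityMeasure μ)
    (hcpt : ∃ K : Set ℝ, IsCompact K ∧ μ Kᶜ = 0)
    (hcent : ∫ x, x ∂μ = 0)
    (hnd : ∀ a : ℝ, μ ≠ Measure.dirac a)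
    (μh : Measure ℝ) (hNev : IsNevanlinna μ μh)
    (t : ℝ) (ht : 1 < t)
    (ωt : ℂ → ℂ) (hsub : IsSubordination μ t ωt)
    (ω0 : ℂ) (him : 0 < ω0.im) (hI : Inu μh ω0 < 1 / (t - 1)) :
    0 < (ω0 - ((t - 1 : ℝ) : ℂ) * ∫ x, ((x : ℂ) - ω0)⁻¹ ∂μh).im ∧
      ωt (ω0 - ((t - 1 : ℝ) : ℂ) * ∫ x, ((x : ℂ) - ω0)⁻¹ ∂μh) = ω0 := by
  obtain ⟨hfin, hNev'⟩ := hNev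
  haveI := hfin
  have hcpos : (0 : ℝ) < t - 1 := by linarith
  set h0 : ℂ := ∫ x, ((x : ℂ) - ω0)⁻¹ ∂μh with hh0
  set z0 : ℂ := ω0 - ((t - 1 : ℝ) : ℂ) * h0 with hz0def
  have him0 : h0.im = ω0.im * Inu μh ω0 := aux_im_integral μh ω0 him
  have hI0 : (t - 1) * Inu μh ω0 < 1 := by
    rw [mul_comm]
    simpa using (lt_div_iff₀ hcpos).mp hI
  have hz0im : 0 < z0.im := by
    have himz : z0.im = ω0.im - (t - 1) * (ω0.im * Inu μh ω0) := by
      simp [hz0def, Complex.sub_im, Complex.mul_im, him0]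
    rw [himz]
    nlinarith [him, hI0]
  refine ⟨hz0im, ?_⟩
  set ω1 : ℂ := ωt z0 with hω1def
  have hω1im : 0 < ω1.im := lt_of_lt_of_le hz0im (hsub.im_ge z0 hz0im)
  set h1 : ℂ := ∫ x, ((x : ℂ) - ω1)⁻¹ ∂μh with hh1
  have hF1 : FTr μ ω1 - ω1 = h1 := hNev' ω1 hω1im
  have hsubeq := hsub.subord z0 hz0im
  have key1 : ω1 = z0 + ((t - 1 : ℝ) : ℂ) * h1 := by
    push_cast at hsubeq hF1 ⊢
    linear_combination hsubeq + ((t : ℂ) - 1) * hF1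
  have key0 : ω0 = z0 + ((t - 1 : ℝ) : ℂ) * h0 := by rw [hz0def]; ring
  have him1 : h1.im = ω1.im * Inu μh ω1 := aux_im_integral μh ω1 hω1im
  have hI1 : (t - 1) * Inu μh ω1 < 1 := by
    have himeq : ω1.im = z0.im + (t - 1) * (ω1.im * Inu μh ω1) := by
      conv_lhs => rw [key1]
      simp [Complex.add_im, Complex.mul_im, him1]
    nlinarith [hω1im, hz0im, aux_Inu_nonneg μh ω1]
  -- now suppose ω1 ≠ ω0 and derive contradiction
  by_contra hne
  have hdiffeq : ω0 - ω1 = ((t - 1 : ℝ) : ℂ) * (h0 - h1) := by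
    rw [key0, key1]; ring
  -- h0 - h1 = (ω0 - ω1) * ∫ g
  set G : ℂ := ∫ x, (((x : ℂ) - ω0)⁻¹ * ((x : ℂ) - ω1)⁻¹) ∂μh with hG
  have hintg : Integrable (fun x : ℝ => ((x : ℂ) - ω0)⁻¹ * ((x : ℂ) - ω1)⁻¹) μh := by
    apply Integrable.mono' (integrable_const ((ω0.im)⁻¹ * (ω1.im)⁻¹))
    · exact ((aux_cont_inv ω0 him).mul (aux_cont_inv ω1 hω1im)).aestronglyMeasurable
    · filter_upwards with x
      rw [norm_mul, norm_inv, norm_inv]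
      have b0 := inv_anti₀ him (aux_im_le_norm x ω0 him)
      have b1 := inv_anti₀ hω1im (aux_im_le_norm x ω1 hω1im)
      have n0 : (0:ℝ) ≤ ‖((x : ℂ) - ω0)‖⁻¹ := by positivity
      have n1 : (0:ℝ) ≤ ‖((x : ℂ) - ω1)‖⁻¹ := by positivity
      exact mul_le_mul b0 b1 n1 (by positivity)
  have hsplit : h0 - h1 = (ω0 - ω1) * G := by
    rw [hh0, hh1, hG, ← integral_const_mul,
      ← integral_sub (aux_integrable_inv μh ω0 him) (aux_integrable_inv μh ω1 hω1im)]
    apply integral_congr_ae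
    filter_upwards with x
    have ha := aux_sub_ne x ω0 him
    have hb := aux_sub_ne x ω1 hω1im
    field_simp
    ring
  have hωne : ω0 - ω1 ≠ 0 := sub_ne_zero.mpr (Ne.symm hne)
  have hGeq : ((t - 1 : ℝ) : ℂ) * G = 1 := by
    have : (ω0 - ω1) * (1 - ((t - 1 : ℝ) : ℂ) * G) = 0 := by
      rw [hsplit] at hdiffeq
      linear_combination hdiffeq
    rcases mul_eq_zero.mp this with h | h
    · exact absurd h hωne
    · linear_combination -h
  -- bound ‖G‖
  have hGbound : ‖G‖ ≤ (Inu μh ω0 + Inu μh ω1) / 2 := by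
    have hb1 : ‖G‖ ≤ ∫ x, ‖((x : ℂ) - ω0)⁻¹ * ((x : ℂ) - ω1)⁻¹‖ ∂μh :=
      norm_integral_le_integral_norm _
    have hb2 : (∫ x, ‖((x : ℂ) - ω0)⁻¹ * ((x : ℂ) - ω1)⁻¹‖ ∂μh)
        ≤ ∫ x, ((Complex.normSq ((x : ℂ) - ω0))⁻¹ + (Complex.normSq ((x : ℂ) - ω1))⁻¹) / 2 ∂μh := by
      apply integral_mono hintg.norm
        (((aux_integrable_nsq μh ω0 him).add (aux_integrable_nsq μh ω1 hω1im)).div_const 2)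
      intro x
      have ha := aux_sub_ne x ω0 him
      have hb := aux_sub_ne x ω1 hω1im
      have hu : (0 : ℝ) < ‖(x : ℂ) - ω0‖ := norm_pos_iff.mpr ha
      have hv : (0 : ℝ) < ‖(x : ℂ) - ω1‖ := norm_pos_iff.mpr hb
      have hnsq0 : Complex.normSq ((x : ℂ) - ω0) = ‖(x : ℂ) - ω0‖ ^ 2 := by
        rw [Complex.normSq_eq_norm_sq]
      have hnsq1 : Complex.normSq ((x : ℂ) - ω1) = ‖(x : ℂ) - ω1‖ ^ 2 := by
        rw [Complex.normSq_eq_norm_sq]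
      show ‖((x : ℂ) - ω0)⁻¹ * ((x : ℂ) - ω1)⁻¹‖
          ≤ ((Complex.normSq ((x : ℂ) - ω0))⁻¹ + (Complex.normSq ((x : ℂ) - ω1))⁻¹) / 2
      rw [norm_mul, norm_inv, norm_inv, hnsq0, hnsq1]
      exact aux_amgm _ _ hu hv
    have hb3 : (∫ x, ((Complex.normSq ((x : ℂ) - ω0))⁻¹ + (Complex.normSq ((x : ℂ) - ω1))⁻¹) / 2 ∂μh)
        = (Inu μh ω0 + Inu μh ω1) / 2 := by
      rw [integral_div, integral_add (aux_integrable_nsq μh ω0 him) (aux_integrable_nsq μh ω1 hω1im)]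
      rfl
    calc ‖G‖ ≤ _ := hb1
      _ ≤ _ := hb2
      _ = _ := hb3
  have hnorm1 : (1 : ℝ) = (t - 1) * ‖G‖ := by
    have := congrArg norm hGeq
    rwa [norm_mul, Complex.norm_real, Real.norm_eq_abs, abs_of_pos hcpos, norm_one, eq_comm] at this
  nlinarith [hI0, hI1, hGbound, aux_Inu_nonneg μh ω0, aux_Inu_nonneg μh ω1]


end
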